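/- Let fⱼ be defined by fⱼ(i) = −πⱼ(∑_{l≤i−1}π_l)/(α_{i−1}π_{i−1}) for i ≤ j and fⱼ(i) = πⱼ(∑_{l≥i}π_l)/(βᵢπᵢ) for i > j, with κ = min{i : i ≥ μ}. Then the forward difference Δfⱼ(i) = fⱼ(i+1) − fⱼ(i) satisfies Δfⱼ(i) ≤ 0 for all i ≠ j and Δfⱼ(j) ≥ 0. -/

import Mathlib

open Finset in
lemma key_right (μ σ2 : ℝ) (hσ : 0 < σ2) (κ : ℤ) (hκ1 : μ ≤ (κ : ℝ))
    (π : ℤ → ℝ) (hpos : ∀ i, 0 < π i) (hsum : Summable π)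
    (hbal : ∀ l : ℤ, κ ≤ l → σ2 * π l = (σ2 + ((l : ℝ) + 1) - μ) * π (l + 1))
    (i : ℤ) (hi : κ ≤ i) :
    ((i : ℝ) - μ) * (∑' l : {l : ℤ // i ≤ l}, π l) ≤ (σ2 + (i : ℝ) - μ) * π i := by
  have hiμ : μ ≤ (i : ℝ) := hκ1.trans (by exact_mod_cast hi)
  have hc : (0:ℝ) ≤ (i : ℝ) - μ := by linarith
  have hrhs : (0:ℝ) ≤ (σ2 + (i : ℝ) - μ) * π i :=
    mul_nonneg (by linarith) (hpos i).le
  -- telescoping identity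
  have tele : ∀ n : ℕ, ∑ l ∈ Finset.Icc i (i + (n : ℤ)), (((l : ℝ)) - μ) * π l
      = (σ2 + (i : ℝ) - μ) * π i - (σ2 + ((i + (n : ℤ) + 1 : ℤ) : ℝ) - μ) * π (i + n + 1) := by
    intro n
    induction n with
    | zero =>
        simp only [Nat.cast_zero, add_zero]
        rw [Finset.Icc_self, Finset.sum_singleton]
        have hb := hbal i hi
        push_cast
        linarith
    | succ n ih =>
        have hins : Finset.Icc i (i + ((n : ℤ) + 1)) = insert (i + (n : ℤ) + 1) (Finset.Icc i (i + (n : ℤ))) := by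
          ext x; simp only [Finset.mem_Icc, Finset.mem_insert]; omega
        have hb := hbal (i + n + 1) (by omega)
        push_cast at hins ih hb ⊢
        rw [hins, Finset.sum_insert (by simp [Finset.mem_Icc]), ih]
        push_cast
        ring_nf
        ring_nf at hb
        linarith
  -- bound for each finite partial sum
  have hbound : ∀ n : ℕ, ∑ l ∈ Finset.Icc i (i + (n : ℤ)), ((i : ℝ) - μ) * π l
      ≤ (σ2 + (i : ℝ) - μ) * π i := by
    intro n
    have h1 : ∑ l ∈ Finset.Icc i (i + (n : ℤ)), ((i : ℝ) - μ) * π l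
        ≤ ∑ l ∈ Finset.Icc i (i + (n : ℤ)), (((l : ℝ)) - μ) * π l := by
      apply Finset.sum_le_sum
      intro l hl
      have : (i : ℝ) ≤ (l : ℝ) := by
        exact_mod_cast (Finset.mem_Icc.mp hl).1
      exact mul_le_mul_of_nonneg_right (by linarith) (hpos l).le
    have h2 : (0:ℝ) ≤ (σ2 + ((i + (n : ℤ) + 1 : ℤ) : ℝ) - μ) * π (i + n + 1) := by
      apply mul_nonneg _ (hpos _).le
      have hn0 : (0:ℝ) ≤ (n:ℝ) := Nat.cast_nonneg n
      push_cast
      linarith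
    calc _ ≤ _ := h1
    _ = _ := tele n
    _ ≤ (σ2 + (i : ℝ) - μ) * π i := by linarith
  -- pass to tsum
  have hsummable : Summable (fun l : {l : ℤ // i ≤ l} => ((i : ℝ) - μ) * π l) :=
    (hsum.subtype _).mul_left _
  have := Summable.tsum_le_of_sum_le hsummable (fun s => by
    -- sum over finset of subtype
    classical
    set t : Finset ℤ := s.map (Function.Embedding.subtype _) with ht
    have hts : ∑ x ∈ s, ((i : ℝ) - μ) * π ↑x = ∑ l ∈ t, ((i : ℝ) - μ) * π l := by
      rw [ht, Finset.sum_map]; rfl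
    rw [hts]
    rcases t.eq_empty_or_nonempty with h | h
    · simpa [h] using hrhs
    · have hmem : ∀ l ∈ t, i ≤ l := by
        intro l hl
        rw [ht, Finset.mem_map] at hl
        obtain ⟨⟨x, hx⟩, _, rfl⟩ := hl
        exact hx
      set N := t.max' h with hN
      have hiN : i ≤ N := le_trans (hmem _ (t.max'_mem h)) le_rfl
      obtain ⟨n, hn⟩ : ∃ n : ℕ, N = i + (n : ℤ) := ⟨(N - i).toNat, by omega⟩
      have hsub : t ⊆ Finset.Icc i (i + (n : ℤ)) := by
        intro l hl
        rw [Finset.mem_Icc]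
        exact ⟨hmem l hl, by rw [← hn]; exact t.le_max' l hl⟩
      calc ∑ l ∈ t, ((i : ℝ) - μ) * π l
          ≤ ∑ l ∈ Finset.Icc i (i + (n : ℤ)), ((i : ℝ) - μ) * π l :=
            Finset.sum_le_sum_of_subset_of_nonneg hsub
              (fun l _ _ => mul_nonneg hc (hpos l).le)
        _ ≤ _ := hbound n)
  rw [tsum_mul_left] at this
  exact this

open Finset in
lemma key_left (μ σ2 : ℝ) (hσ : 0 < σ2) (κ : ℤ) (hκ2 : (κ : ℝ) < μ + 1)
    (π : ℤ → ℝ) (hpos : ∀ i, 0 < π i) (hsum : Summable π)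
    (hbal : ∀ l : ℤ, l + 2 ≤ κ → (σ2 + μ - (l : ℝ)) * π l = σ2 * π (l + 1))
    (i : ℤ) (hi : i + 1 ≤ κ) :
    (μ - (i : ℝ)) * (∑' l : {l : ℤ // l ≤ i}, π l) ≤ (σ2 + μ - (i : ℝ)) * π i := by
  have hiμ : (i : ℝ) ≤ μ := by
    have : ((i : ℝ) + 1) ≤ (κ : ℝ) := by exact_mod_cast hi
    linarith
  have hc : (0:ℝ) ≤ μ - (i : ℝ) := by linarith
  have hrhs : (0:ℝ) ≤ (σ2 + μ - (i : ℝ)) * π i :=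
    mul_nonneg (by linarith) (hpos i).le
  have tele : ∀ n : ℕ, ∑ l ∈ Finset.Icc (i - (n : ℤ)) i, (μ - ((l : ℝ))) * π l
      = (σ2 + μ - (i : ℝ)) * π i - (σ2 + μ - ((i - (n : ℤ) - 1 : ℤ) : ℝ)) * π (i - n - 1) := by
    intro n
    induction n with
    | zero =>
        simp only [Nat.cast_zero, sub_zero]
        rw [Finset.Icc_self, Finset.sum_singleton]
        have hb := hbal (i - 1) (by omega)
        have : i - 1 + 1 = i := by omega
        rw [this] at hb
        push_cast at hb ⊢
        linarith
    | succ n ih =>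
        have hins : Finset.Icc (i - ((n : ℤ) + 1)) i = insert (i - (n : ℤ) - 1) (Finset.Icc (i - (n : ℤ)) i) := by
          ext x; simp only [Finset.mem_Icc, Finset.mem_insert]; omega
        have hb := hbal (i - n - 2) (by omega)
        have he : i - (n : ℤ) - 2 + 1 = i - n - 1 := by omega
        rw [he] at hb
        push_cast at hins ih hb ⊢
        rw [hins, Finset.sum_insert (by simp [Finset.mem_Icc])]
        rw [ih]
        have he2 : i - ((n : ℤ) + 1) - 1 = i - (n : ℤ) - 2 := by omega
        rw [he2]
        push_cast
        ring_nf
        ring_nf at hb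
        linarith
  have hbound : ∀ n : ℕ, ∑ l ∈ Finset.Icc (i - (n : ℤ)) i, (μ - (i : ℝ)) * π l
      ≤ (σ2 + μ - (i : ℝ)) * π i := by
    intro n
    have h1 : ∑ l ∈ Finset.Icc (i - (n : ℤ)) i, (μ - (i : ℝ)) * π l
        ≤ ∑ l ∈ Finset.Icc (i - (n : ℤ)) i, (μ - ((l : ℝ))) * π l := by
      apply Finset.sum_le_sum
      intro l hl
      have : (l : ℝ) ≤ (i : ℝ) := by
        exact_mod_cast (Finset.mem_Icc.mp hl).2
      exact mul_le_mul_of_nonneg_right (by linarith) (hpos l).le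
    have h2 : (0:ℝ) ≤ (σ2 + μ - ((i - (n : ℤ) - 1 : ℤ) : ℝ)) * π (i - n - 1) := by
      apply mul_nonneg _ (hpos _).le
      have hn0 : (0:ℝ) ≤ (n:ℝ) := Nat.cast_nonneg n
      push_cast
      linarith
    calc _ ≤ _ := h1
    _ = _ := tele n
    _ ≤ (σ2 + μ - (i : ℝ)) * π i := by linarith
  have hsummable : Summable (fun l : {l : ℤ // l ≤ i} => (μ - (i : ℝ)) * π l) :=
    (hsum.subtype _).mul_left _
  have := Summable.tsum_le_of_sum_le hsummable (fun s => by
    classical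
    set t : Finset ℤ := s.map (Function.Embedding.subtype _) with ht
    have hts : ∑ x ∈ s, (μ - (i : ℝ)) * π ↑x = ∑ l ∈ t, (μ - (i : ℝ)) * π l := by
      rw [ht, Finset.sum_map]; rfl
    rw [hts]
    rcases t.eq_empty_or_nonempty with h | h
    · simpa [h] using hrhs
    · have hmem : ∀ l ∈ t, l ≤ i := by
        intro l hl
        rw [ht, Finset.mem_map] at hl
        obtain ⟨⟨x, hx⟩, _, rfl⟩ := hl
        exact hx
      set N := t.min' h with hN
      have hiN : N ≤ i := hmem _ (t.min'_mem h)
      obtain ⟨n, hn⟩ : ∃ n : ℕ, N = i - (n : ℤ) := ⟨(i - N).toNat, by omega⟩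
      have hsub : t ⊆ Finset.Icc (i - (n : ℤ)) i := by
        intro l hl
        rw [Finset.mem_Icc]
        exact ⟨by rw [← hn]; exact t.min'_le l hl, hmem l hl⟩
      calc ∑ l ∈ t, (μ - (i : ℝ)) * π l
          ≤ ∑ l ∈ Finset.Icc (i - (n : ℤ)) i, (μ - (i : ℝ)) * π l :=
            Finset.sum_le_sum_of_subset_of_nonneg hsub
              (fun l _ _ => mul_nonneg hc (hpos l).le)
        _ ≤ _ := hbound n)
  rw [tsum_mul_left] at this
  exact this

lemma split_right (π : ℤ → ℝ) (hsum : Summable π) (i : ℤ) :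
    (∑' l : {l : ℤ // i ≤ l}, π l) = π i + ∑' l : {l : ℤ // i + 1 ≤ l}, π l := by
  have hset : {l : ℤ | i ≤ l} = ({i} : Set ℤ) ∪ {l : ℤ | i + 1 ≤ l} := by
    ext l; simp only [Set.mem_setOf_eq, Set.mem_union, Set.mem_singleton_iff]; omega
  have hd : Disjoint ({i} : Set ℤ) {l : ℤ | i + 1 ≤ l} := by
    rw [Set.disjoint_left]; intro a ha hb
    simp only [Set.mem_singleton_iff] at ha
    simp only [Set.mem_setOf_eq] at hb
    omega
  calc (∑' l : {l : ℤ // i ≤ l}, π l)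
      = ∑' l : ↑(({i} : Set ℤ) ∪ {l : ℤ | i + 1 ≤ l}), π ↑l := by rw [← hset]; rfl
    _ = (∑' l : ({i} : Set ℤ), π ↑l) + ∑' l : {l : ℤ | i + 1 ≤ l}, π ↑l :=
        Summable.tsum_union_disjoint hd (hsum.subtype _) (hsum.subtype _)
    _ = π i + ∑' l : {l : ℤ // i + 1 ≤ l}, π l := by rw [tsum_singleton]; rfl

lemma split_left (π : ℤ → ℝ) (hsum : Summable π) (i : ℤ) :
    (∑' l : {l : ℤ // l ≤ i}, π l) = π i + ∑' l : {l : ℤ // l ≤ i - 1}, π l := by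
  have hset : {l : ℤ | l ≤ i} = ({i} : Set ℤ) ∪ {l : ℤ | l ≤ i - 1} := by
    ext l; simp only [Set.mem_setOf_eq, Set.mem_union, Set.mem_singleton_iff]; omega
  have hd : Disjoint ({i} : Set ℤ) {l : ℤ | l ≤ i - 1} := by
    rw [Set.disjoint_left]; intro a ha hb
    simp only [Set.mem_singleton_iff] at ha
    simp only [Set.mem_setOf_eq] at hb
    omega
  calc (∑' l : {l : ℤ // l ≤ i}, π l)
      = ∑' l : ↑(({i} : Set ℤ) ∪ {l : ℤ | l ≤ i - 1}), π ↑l := by rw [← hset]; rfl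
    _ = (∑' l : ({i} : Set ℤ), π ↑l) + ∑' l : {l : ℤ | l ≤ i - 1}, π ↑l :=
        Summable.tsum_union_disjoint hd (hsum.subtype _) (hsum.subtype _)
    _ = π i + ∑' l : {l : ℤ // l ≤ i - 1}, π l := by rw [tsum_singleton]; rfl

lemma split_total (π : ℤ → ℝ) (hsum : HasSum π 1) (i : ℤ) :
    (∑' l : {l : ℤ // l ≤ i}, π l) + (∑' l : {l : ℤ // i + 1 ≤ l}, π l) = 1 := by
  have hs : Summable π := hsum.summable
  have h := Summable.tsum_add_tsum_compl (s := {l : ℤ | l ≤ i}) (f := π) (hs.subtype _) (hs.subtype _)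
  rw [hsum.tsum_eq] at h
  have hset : ({l : ℤ | l ≤ i}ᶜ : Set ℤ) = {l : ℤ | i + 1 ≤ l} := by
    ext l; simp only [Set.mem_compl_iff, Set.mem_setOf_eq]; omega
  rw [hset] at h
  exact h

/-- Sign structure of the differences of the Stein equation solution: with `κ = ⌈μ⌉`,
`Δfⱼ(i) ≤ 0` for all `i ≠ j` and `Δfⱼ(j) ≥ 0`. -/
theorem stein_solution_difference_signs
    (μ σ2 : ℝ) (hσ : 0 < σ2) (κ : ℤ)
    (hκ1 : μ ≤ (κ : ℝ)) (hκ2 : (κ : ℝ) < μ + 1)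
    (π : ℤ → ℝ) (hpos : ∀ i, 0 < π i) (hsum : HasSum π 1)
    (hbal : ∀ i : ℤ, (if κ ≤ i then σ2 else σ2 + μ - (i : ℝ)) * π i
      = (if κ ≤ i + 1 then σ2 + ((i : ℝ) + 1) - μ else σ2) * π (i + 1)) :
    ∀ j : ℤ,
      let α : ℤ → ℝ := fun i => if κ ≤ i then σ2 else σ2 + μ - (i : ℝ)
      let β : ℤ → ℝ := fun i => if κ ≤ i then σ2 + (i : ℝ) - μ else σ2
      let f : ℤ → ℝ := fun i =>
        if i ≤ j then
          -(π j) * (∑' l : {l : ℤ // l ≤ i - 1}, π l) / (α (i - 1) * π (i - 1))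
        else
          π j * (∑' l : {l : ℤ // i ≤ l}, π l) / (β i * π i)
      (∀ i : ℤ, i ≠ j → f (i + 1) - f i ≤ 0) ∧ 0 ≤ f (j + 1) - f j := by
  intro j α β f
  have hS : Summable π := hsum.summable
  set A : ℤ → ℝ := fun m => ∑' l : {l : ℤ // l ≤ m}, π l with hA_def
  set B : ℤ → ℝ := fun m => ∑' l : {l : ℤ // m ≤ l}, π l with hB_def
  have hA : ∀ m, 0 ≤ A m := fun m => tsum_nonneg (fun l => (hpos l).le)
  have hB : ∀ m, 0 ≤ B m := fun m => tsum_nonneg (fun l => (hpos l).le)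
  have hAsplit : ∀ m : ℤ, A (m - 1) = A m - π m := by
    intro m; have := split_left π hS m; simp only [hA_def]; linarith [this]
  have hBsplit : ∀ m : ℤ, B (m + 1) = B m - π m := by
    intro m; have := split_right π hS m; simp only [hB_def]; linarith [this]
  have hα : ∀ l : ℤ, 0 < α l := by
    intro l; simp only [α]; split_ifs with h
    · exact hσ
    · have : (l : ℝ) + 1 ≤ (κ : ℝ) := by exact_mod_cast (by omega : l + 1 ≤ κ)
      linarith
  have hβ : ∀ l : ℤ, 0 < β l := by
    intro l; simp only [β]; split_ifs with h
    · have : (κ : ℝ) ≤ (l : ℝ) := by exact_mod_cast h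
      linarith
    · exact hσ
  have hdiff : ∀ l : ℤ, α l - β l = μ - (l : ℝ) := by
    intro l; simp only [α, β]; split_ifs with h <;> ring
  have hbal' : ∀ l : ℤ, α l * π l = β (l + 1) * π (l + 1) := by
    intro l
    have h := hbal l
    have hc : ((l + 1 : ℤ) : ℝ) = (l : ℝ) + 1 := by push_cast; ring
    simp only [α, β, hc]
    exact h
  -- key inequalities
  have key1 : ∀ l : ℤ, (μ - (l : ℝ)) * A l ≤ α l * π l := by
    intro l
    rcases le_or_gt κ l with h | h
    · have h1 : μ - (l : ℝ) ≤ 0 := by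
        have : (κ : ℝ) ≤ (l : ℝ) := by exact_mod_cast h
        linarith
      have := mul_nonneg (hα l).le (hpos l).le
      nlinarith [hA l]
    · have hbalL : ∀ l : ℤ, l + 2 ≤ κ → (σ2 + μ - (l : ℝ)) * π l = σ2 * π (l + 1) := by
        intro m hm
        have h := hbal m
        rw [if_neg (by omega), if_neg (by omega)] at h
        exact h
      have hk := key_left μ σ2 hσ κ hκ2 π hpos hS hbalL l (by omega)
      have hαl : α l = σ2 + μ - (l : ℝ) := by simp only [α]; rw [if_neg (by omega)]
      rw [hαl]
      exact hk
  have key2 : ∀ l : ℤ, ((l : ℝ) - μ) * B l ≤ β l * π l := by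
    intro l
    rcases le_or_gt κ l with h | h
    · have hbalR : ∀ m : ℤ, κ ≤ m → σ2 * π m = (σ2 + ((m : ℝ) + 1) - μ) * π (m + 1) := by
        intro m hm
        have h := hbal m
        rw [if_pos hm, if_pos (by omega)] at h
        exact h
      have hk := key_right μ σ2 hσ κ hκ1 π hpos hS hbalR l h
      have hβl : β l = σ2 + (l : ℝ) - μ := by simp only [β]; rw [if_pos h]
      rw [hβl]
      exact hk
    · have h1 : (l : ℝ) - μ ≤ 0 := by
        have : (l : ℝ) + 1 ≤ (κ : ℝ) := by exact_mod_cast (by omega : l + 1 ≤ κ)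
        linarith
      have := mul_nonneg (hβ l).le (hpos l).le
      nlinarith [hB l]
  -- formulas for f
  have hfle : ∀ i : ℤ, i ≤ j → f i = -(π j) * A (i - 1) / (β i * π i) := by
    intro i hi
    simp only [f, if_pos hi]
    have hb := hbal' (i - 1)
    rw [sub_add_cancel] at hb
    rw [hb]
  have hfgt : ∀ i : ℤ, j < i → f i = π j * B i / (β i * π i) := by
    intro i hi
    simp only [f, if_neg (by omega : ¬ i ≤ j)]
    rfl
  constructor
  · intro i hij
    rcases lt_or_gt_of_ne hij with hlt | hgt
    · -- i < j
      have e1 : f (i + 1) = -(π j) * A i / (β (i + 1) * π (i + 1)) := by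
        rw [hfle (i + 1) (by omega)]
        norm_num
      have e2 : f i = -(π j) * A (i - 1) / (β i * π i) := hfle i (by omega)
      rw [e1, e2]
      have h1 : A (i - 1) / (β i * π i) ≤ A i / (β (i + 1) * π (i + 1)) := by
        rw [div_le_div_iff₀ (mul_pos (hβ i) (hpos i)) (mul_pos (hβ (i + 1)) (hpos (i + 1)))]
        rw [← hbal' i, hAsplit i]
        have hkey := mul_le_mul_of_nonneg_right (key1 i) (hpos i).le
        have hd := hdiff i
        have hid : A i * (β i * π i) - (A i - π i) * (α i * π i)
            = α i * π i * π i - (μ - (i : ℝ)) * A i * π i := by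
          linear_combination (-(A i * π i)) * hd
        linarith
      have h2 := mul_le_mul_of_nonneg_left h1 (hpos j).le
      simp only [neg_mul, neg_div, mul_div_assoc]
      linarith
    · -- j < i
      have e1 : f (i + 1) = π j * B (i + 1) / (β (i + 1) * π (i + 1)) := hfgt (i + 1) (by omega)
      have e2 : f i = π j * B i / (β i * π i) := hfgt i (by omega)
      rw [e1, e2]
      have h1 : B (i + 1) / (β (i + 1) * π (i + 1)) ≤ B i / (β i * π i) := by
        rw [div_le_div_iff₀ (mul_pos (hβ (i + 1)) (hpos (i + 1))) (mul_pos (hβ i) (hpos i))]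
        rw [← hbal' i, hBsplit i]
        have hkey := mul_le_mul_of_nonneg_right (key2 i) (hpos i).le
        have hd := hdiff i
        have hid : B i * (α i * π i) - (B i - π i) * (β i * π i)
            = β i * π i * π i - ((i : ℝ) - μ) * B i * π i := by
          linear_combination (B i * π i) * hd
        linarith
      have h2 := mul_le_mul_of_nonneg_left h1 (hpos j).le
      simp only [mul_div_assoc]
      linarith
  · have e1 : f (j + 1) = π j * B (j + 1) / (β (j + 1) * π (j + 1)) := hfgt (j + 1) (by omega)
    have e2 : f j = -(π j) * A (j - 1) / (β j * π j) := hfle j le_rfl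
    rw [e1, e2]
    have h1 : 0 ≤ π j * B (j + 1) / (β (j + 1) * π (j + 1)) :=
      div_nonneg (mul_nonneg (hpos j).le (hB _)) (mul_pos (hβ _) (hpos _)).le
    have h2 : 0 ≤ π j * A (j - 1) / (β j * π j) :=
      div_nonneg (mul_nonneg (hpos j).le (hA _)) (mul_pos (hβ _) (hpos _)).le
    simp only [neg_mul, neg_div]
    linarith
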